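/- If sequences a and b satisfy linear recurrences with constant coefficients of orders L1 and L2 respectively, and a(n) = b(n) for all n < L1 + L2, then a(n) = b(n) for all n. (Equality of C-finite sequences is decidable from finitely many terms.) -/
import Mathlib

open Polynomial

noncomputable def shiftL : (ℕ → ℂ) →ₗ[ℂ] (ℕ → ℂ) where
  toFun f := fun n => f (n + 1)
  map_add' _ _ := rfl
  map_smul' _ _ := rfl

lemma shiftL_pow_apply (k : ℕ) (f : ℕ → ℂ) (n : ℕ) : ((shiftL ^ k) f) n = f (n + k) := by
  induction k generalizing n with
  | zero => rfl
  | succ k ih =>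
    rw [pow_succ']
    have : ((shiftL * shiftL ^ k) f) n = ((shiftL ^ k) f) (n + 1) := rfl
    rw [this, ih]
    ring_nf

lemma aeval_shift_apply (r : ℂ[X]) (f : ℕ → ℂ) (n : ℕ) :
    ((Polynomial.aeval shiftL r) f) n
      = ∑ i ∈ Finset.range (r.natDegree + 1), r.coeff i * f (n + i) := by
  rw [Polynomial.aeval_eq_sum_range]
  rw [LinearMap.coe_sum, Finset.sum_apply, Finset.sum_apply]
  refine Finset.sum_congr rfl fun i _ => ?_
  simp [shiftL_pow_apply]

-- the "recurrence polynomial" kills the sequence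
lemma recur_poly_kills (L : ℕ) (c : Fin L → ℂ) (a : ℕ → ℂ)
    (ha : ∀ n ≥ L, a n = ∑ i : Fin L, c i * a (n - ((i : ℕ) + 1))) :
    (Polynomial.aeval shiftL ((X : ℂ[X]) ^ L - ∑ i : Fin L, C (c i) * X ^ (L - 1 - (i : ℕ)))) a = 0 := by
  funext n
  simp only [map_sub, map_sum, map_mul, map_pow, Polynomial.aeval_X, Polynomial.aeval_C,
    LinearMap.sub_apply, LinearMap.coe_sum, Finset.sum_apply, Pi.sub_apply, Pi.zero_apply,
    Finset.sum_apply, Module.algebraMap_end_apply, LinearMap.smul_apply, Pi.smul_apply,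
    smul_eq_mul, shiftL_pow_apply, Module.End.mul_apply]
  have h := ha (n + L) (by omega)
  rw [h]
  rw [sub_eq_zero]
  refine Finset.sum_congr rfl fun i _ => ?_
  have hi : (i : ℕ) < L := i.2
  have hidx : n + L - ((i : ℕ) + 1) = n + (L - 1 - (i : ℕ)) := by omega
  rw [hidx]

lemma recur_poly_monic (L : ℕ) (c : Fin L → ℂ) :
    ((X : ℂ[X]) ^ L - ∑ i : Fin L, C (c i) * X ^ (L - 1 - (i : ℕ))).Monic ∧
    ((X : ℂ[X]) ^ L - ∑ i : Fin L, C (c i) * X ^ (L - 1 - (i : ℕ))).natDegree = L := by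
  have hdeg : (∑ i : Fin L, C (c i) * X ^ (L - 1 - (i : ℕ)) : ℂ[X]).degree < (L : WithBot ℕ) := by
    refine lt_of_le_of_lt (Polynomial.degree_sum_le _ _) ?_
    rw [Finset.sup_lt_iff (by exact_mod_cast WithBot.bot_lt_coe L)]
    intro i _
    refine lt_of_le_of_lt (Polynomial.degree_mul_le _ _) ?_
    have h1 : (C (c i) : ℂ[X]).degree ≤ 0 := Polynomial.degree_C_le
    have h2 : ((X : ℂ[X]) ^ (L - 1 - (i : ℕ))).degree = (L - 1 - (i : ℕ) : ℕ) :=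
      Polynomial.degree_X_pow _
    calc (C (c i) : ℂ[X]).degree + ((X : ℂ[X]) ^ (L - 1 - (i : ℕ))).degree
        ≤ 0 + (L - 1 - (i : ℕ) : ℕ) := add_le_add h1 (le_of_eq h2)
      _ = ((L - 1 - (i : ℕ) : ℕ) : WithBot ℕ) := by rw [zero_add]
      _ < (L : WithBot ℕ) := by
          exact_mod_cast (by have := i.2; omega : L - 1 - (i : ℕ) < L)
  have hdeg' : (∑ i : Fin L, C (c i) * X ^ (L - 1 - (i : ℕ)) : ℂ[X]).degree
      < ((X : ℂ[X]) ^ L).degree := by rwa [Polynomial.degree_X_pow]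
  have hdegp : ((X : ℂ[X]) ^ L - ∑ i : Fin L, C (c i) * X ^ (L - 1 - (i : ℕ))).degree = L := by
    rw [Polynomial.degree_sub_eq_left_of_degree_lt hdeg', Polynomial.degree_X_pow]
  exact ⟨(Polynomial.monic_X_pow L).sub_of_left hdeg',
    Polynomial.natDegree_eq_of_degree_eq_some hdegp⟩

theorem cfinite_equality_decidable (a b : ℕ → ℂ) (L1 L2 : ℕ)
    (c : Fin L1 → ℂ) (d : Fin L2 → ℂ)
    (ha : ∀ n ≥ L1, a n = ∑ i : Fin L1, c i * a (n - ((i : ℕ) + 1)))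
    (hb : ∀ n ≥ L2, b n = ∑ j : Fin L2, d j * b (n - ((j : ℕ) + 1)))
    (hinit : ∀ n < L1 + L2, a n = b n) :
    ∀ n, a n = b n := by
  set p := (X : ℂ[X]) ^ L1 - ∑ i : Fin L1, C (c i) * X ^ (L1 - 1 - (i : ℕ)) with hp
  set q := (X : ℂ[X]) ^ L2 - ∑ j : Fin L2, C (d j) * X ^ (L2 - 1 - (j : ℕ)) with hq
  have hpa := recur_poly_kills L1 c a ha
  have hqb := recur_poly_kills L2 d b hb
  obtain ⟨hpm, hpd⟩ := recur_poly_monic L1 c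
  obtain ⟨hqm, hqd⟩ := recur_poly_monic L2 d
  set r := p * q with hr
  have hrm : r.Monic := hpm.mul hqm
  have hrd : r.natDegree = L1 + L2 := by
    rw [hr, Polynomial.natDegree_mul hpm.ne_zero hqm.ne_zero, hpd, hqd]
  have hra : (Polynomial.aeval shiftL r) a = 0 := by
    rw [hr, mul_comm p q, map_mul, Module.End.mul_apply, hpa, map_zero]
  have hrb : (Polynomial.aeval shiftL r) b = 0 := by
    rw [hr, map_mul, Module.End.mul_apply, hqb, map_zero]
  have key : ∀ f : ℕ → ℂ, (Polynomial.aeval shiftL r) f = 0 → ∀ m,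
      f (m + (L1 + L2)) = -∑ k ∈ Finset.range (L1 + L2), r.coeff k * f (m + k) := by
    intro f hf m
    have h0 : ((Polynomial.aeval shiftL r) f) m = 0 := by rw [hf]; rfl
    rw [aeval_shift_apply, hrd, Finset.sum_range_succ] at h0
    have hc : r.coeff (L1 + L2) = 1 := by
      have h1 := hrm
      rwa [Polynomial.Monic, Polynomial.leadingCoeff, hrd] at h1
    rw [hc, one_mul] at h0
    linear_combination h0
  intro n
  induction n using Nat.strong_induction_on with
  | _ n ih =>
    by_cases hn : n < L1 + L2
    · exact hinit n hn
    · have hm : n = (n - (L1 + L2)) + (L1 + L2) := by omega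
      rw [hm, key a hra, key b hrb]
      congr 1
      refine Finset.sum_congr rfl fun k hk => ?_
      rw [ih (n - (L1 + L2) + k) (by simp at hk; omega)]
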